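/- Characterization of real slice functions: let f : Ω_D → ℍ be a slice function induced by the stem function (F₁, F₂). The following are equivalent: (i) F₁ and F₂ take values in ℝ ⊆ ℍ (f is real); (ii) for every J ∈ 𝕊, f maps Ω_D ∩ (ℝ + ℝJ) into ℝ + ℝJ; (iii) f(x^c) = (f(x))^c for every x ∈ Ω_D, where x^c denotes quaternionic conjugation. -/

import Mathlib

/- Identify ℍ with `Quaternion ℝ`, quaternionic conjugation being `star`.
A slice function on the circularization of a conjugation-symmetric set `D ⊆ ℂ`
is induced by a stem function `(F₁, F₂)` via
`f (α + Iβ) = F₁ (α + iβ) + I * F₂ (α + iβ)` for `α + iβ ∈ D`, `I² = -1`. -/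


lemma aux_re_zero (I : Quaternion ℝ) (h : I ^ 2 = -1) : I.re = 0 := by
  rw [sq] at h
  have hre := congrArg QuaternionAlgebra.re h
  have hi := congrArg QuaternionAlgebra.imI h
  have hj := congrArg QuaternionAlgebra.imJ h
  have hk := congrArg QuaternionAlgebra.imK h
  simp only [Quaternion.re_mul, Quaternion.imI_mul, Quaternion.imJ_mul, Quaternion.imK_mul,
    Quaternion.re_neg, Quaternion.imI_neg, Quaternion.imJ_neg, Quaternion.imK_neg,
    Quaternion.re_one, Quaternion.imI_one, Quaternion.imJ_one, Quaternion.imK_one,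
    neg_zero] at hre hi hj hk
  ring_nf at hre hi hj hk
  by_contra hne
  have h1 : I.imI = 0 := by
    have h2 : I.re * I.imI = 0 := by linarith
    rcases mul_eq_zero.mp h2 with h|h
    · exact absurd h hne
    · exact h
  have h2 : I.imJ = 0 := by
    have h2 : I.re * I.imJ = 0 := by linarith
    rcases mul_eq_zero.mp h2 with h|h
    · exact absurd h hne
    · exact h
  have h3 : I.imK = 0 := by
    have h2 : I.re * I.imK = 0 := by linarith
    rcases mul_eq_zero.mp h2 with h|h
    · exact absurd h hne
    · exact h
  rw [h1, h2, h3] at hre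
  nlinarith [sq_nonneg I.re]

lemma aux_star_eq (I : Quaternion ℝ) (h : I ^ 2 = -1) : star I = -I := by
  have := aux_re_zero I h
  ext <;> simp [this]

lemma aux_real (q : Quaternion ℝ) (h1 : q.imI = 0) (h2 : q.imJ = 0) (h3 : q.imK = 0) :
    ∃ r : ℝ, q = (r : Quaternion ℝ) :=
  ⟨q.re, by ext <;> simp [h1, h2, h3]⟩

def qi : Quaternion ℝ := ⟨0,1,0,0⟩
def qj : Quaternion ℝ := ⟨0,0,1,0⟩
def qk : Quaternion ℝ := ⟨0,0,0,1⟩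
@[simp] lemma qi_re : qi.re = 0 := rfl
@[simp] lemma qi_imI : qi.imI = 1 := rfl
@[simp] lemma qi_imJ : qi.imJ = 0 := rfl
@[simp] lemma qi_imK : qi.imK = 0 := rfl
@[simp] lemma qj_re : qj.re = 0 := rfl
@[simp] lemma qj_imI : qj.imI = 0 := rfl
@[simp] lemma qj_imJ : qj.imJ = 1 := rfl
@[simp] lemma qj_imK : qj.imK = 0 := rfl
@[simp] lemma qk_re : qk.re = 0 := rfl
@[simp] lemma qk_imI : qk.imI = 0 := rfl
@[simp] lemma qk_imJ : qk.imJ = 0 := rfl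
@[simp] lemma qk_imK : qk.imK = 1 := rfl

lemma qi_sq : qi ^ 2 = -1 := by rw [sq]; ext <;> simp [Quaternion.re_one, Quaternion.imI_one, Quaternion.imJ_one, Quaternion.imK_one]
lemma qj_sq : qj ^ 2 = -1 := by rw [sq]; ext <;> simp [Quaternion.re_one, Quaternion.imI_one, Quaternion.imJ_one, Quaternion.imK_one]
lemma qk_sq : qk ^ 2 = -1 := by rw [sq]; ext <;> simp [Quaternion.re_one, Quaternion.imI_one, Quaternion.imJ_one, Quaternion.imK_one]

lemma aux_star_x (I : Quaternion ℝ) (hI : I ^ 2 = -1) (α β : ℝ) :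
    star ((α : Quaternion ℝ) + I * (β : Quaternion ℝ))
      = (α : Quaternion ℝ) + (-I) * (β : Quaternion ℝ) := by
  rw [star_add, star_mul, Quaternion.star_coe, Quaternion.star_coe, aux_star_eq I hI,
    Quaternion.coe_commutes]

/-- **Characterization of real slice functions**: the following are equivalent:
(i) the stem components `F₁, F₂` are real valued;
(ii) for every `J ∈ 𝕊`, `f` maps `Ω_D ∩ (ℝ + ℝJ)` into `ℝ + ℝJ`;
(iii) `f (x^c) = (f x)^c` on `Ω_D`. -/
theorem real_slice_function_characterization
    (D : Set ℂ) (hne : D.Nonempty)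
    (hDsymm : ∀ z ∈ D, (starRingEnd ℂ) z ∈ D)
    (F₁ F₂ : ℂ → Quaternion ℝ)
    (hstem : ∀ z ∈ D,
      F₁ ((starRingEnd ℂ) z) = F₁ z ∧ F₂ ((starRingEnd ℂ) z) = - F₂ z)
    (f : Quaternion ℝ → Quaternion ℝ)
    (hslice : ∀ z ∈ D, ∀ I : Quaternion ℝ, I ^ 2 = -1 →
      f ((z.re : Quaternion ℝ) + I * (z.im : Quaternion ℝ)) = F₁ z + I * F₂ z) :
    ((∀ z ∈ D, (∃ r : ℝ, F₁ z = (r : Quaternion ℝ)) ∧ (∃ r : ℝ, F₂ z = (r : Quaternion ℝ)))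
      ↔ (∀ J : Quaternion ℝ, J ^ 2 = -1 → ∀ z ∈ D,
          ∃ s t : ℝ, f ((z.re : Quaternion ℝ) + J * (z.im : Quaternion ℝ))
            = (s : Quaternion ℝ) + (t : Quaternion ℝ) * J))
    ∧
    ((∀ z ∈ D, (∃ r : ℝ, F₁ z = (r : Quaternion ℝ)) ∧ (∃ r : ℝ, F₂ z = (r : Quaternion ℝ)))
      ↔ (∀ z ∈ D, ∀ I : Quaternion ℝ, I ^ 2 = -1 →
          f (star ((z.re : Quaternion ℝ) + I * (z.im : Quaternion ℝ)))
            = star (f ((z.re : Quaternion ℝ) + I * (z.im : Quaternion ℝ))))) := by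
  constructor
  · constructor
    · intro hP J hJ z hz
      obtain ⟨⟨r, hr⟩, ⟨t, ht⟩⟩ := hP z hz
      refine ⟨r, t, ?_⟩
      rw [hslice z hz J hJ, hr, ht, Quaternion.coe_commutes]
    · intro h z hz
      obtain ⟨s₁, t₁, h₁⟩ := h qi qi_sq z hz
      obtain ⟨s₂, t₂, h₂⟩ := h qj qj_sq z hz
      obtain ⟨s₃, t₃, h₃⟩ := h qk qk_sq z hz
      rw [hslice z hz qi qi_sq] at h₁
      rw [hslice z hz qj qj_sq] at h₂
      rw [hslice z hz qk qk_sq] at h₃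
      have e1J := congrArg QuaternionAlgebra.imJ h₁
      have e1K := congrArg QuaternionAlgebra.imK h₁
      have e2I := congrArg QuaternionAlgebra.imI h₂
      have e2K := congrArg QuaternionAlgebra.imK h₂
      have e3I := congrArg QuaternionAlgebra.imI h₃
      have e3J := congrArg QuaternionAlgebra.imJ h₃
      simp only [Quaternion.imI_add, Quaternion.imJ_add, Quaternion.imK_add,
        Quaternion.imI_mul, Quaternion.imJ_mul, Quaternion.imK_mul,
        Quaternion.imI_coe, Quaternion.imJ_coe, Quaternion.imK_coe, Quaternion.re_coe,
        qi_re, qi_imI, qi_imJ, qi_imK, qj_re, qj_imI, qj_imJ, qj_imK,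
        qk_re, qk_imI, qk_imJ, qk_imK] at e1J e1K e2I e2K e3I e3J
      ring_nf at e1J e1K e2I e2K e3I e3J
      exact ⟨aux_real _ (by linarith) (by linarith) (by linarith),
        aux_real _ (by linarith) (by linarith) (by linarith)⟩
  · constructor
    · intro hP z hz I hI
      have hI' : (-I) ^ 2 = -1 := by rw [neg_sq]; exact hI
      rw [aux_star_x I hI z.re z.im, hslice z hz (-I) hI', hslice z hz I hI]
      obtain ⟨⟨r, hr⟩, ⟨t, ht⟩⟩ := hP z hz
      rw [hr, ht, star_add, star_mul, Quaternion.star_coe, Quaternion.star_coe,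
        aux_star_eq I hI, Quaternion.coe_commutes]
    · intro h z hz
      have key : ∀ I : Quaternion ℝ, I ^ 2 = -1 →
          F₁ z + (-I) * F₂ z = star (F₁ z + I * F₂ z) := by
        intro I hI
        have hI' : (-I) ^ 2 = -1 := by rw [neg_sq]; exact hI
        have E := h z hz I hI
        rw [aux_star_x I hI z.re z.im, hslice z hz (-I) hI', hslice z hz I hI] at E
        exact E
      have E1 := key qi qi_sq
      have E2 := key qj qj_sq
      have E3 := key qk qk_sq
      have e1r := congrArg QuaternionAlgebra.re E1
      have e1I := congrArg QuaternionAlgebra.imI E1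
      have e1J := congrArg QuaternionAlgebra.imJ E1
      have e1K := congrArg QuaternionAlgebra.imK E1
      have e2r := congrArg QuaternionAlgebra.re E2
      have e3r := congrArg QuaternionAlgebra.re E3
      simp only [Quaternion.re_add, Quaternion.imI_add, Quaternion.imJ_add, Quaternion.imK_add,
        Quaternion.re_mul, Quaternion.imI_mul, Quaternion.imJ_mul, Quaternion.imK_mul,
        Quaternion.re_star, Quaternion.imI_star, Quaternion.imJ_star, Quaternion.imK_star,
        Quaternion.re_neg, Quaternion.imI_neg, Quaternion.imJ_neg, Quaternion.imK_neg,
        qi_re, qi_imI, qi_imJ, qi_imK, qj_re, qj_imI, qj_imJ, qj_imK,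
        qk_re, qk_imI, qk_imJ, qk_imK] at e1r e1I e1J e1K e2r e3r
      ring_nf at e1r e1I e1J e1K e2r e3r
      exact ⟨aux_real _ (by linarith) (by linarith) (by linarith),
        aux_real _ (by linarith) (by linarith) (by linarith)⟩
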